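/- A unitary representation (π, H) of a group K is tame (i.e., the union of the fixed spaces H^{K_j} is dense in H) if and only if π is continuous with respect to the group topology on K for which (K_j)_{j∈J} is a basis of identity neighborhoods. -/

import Mathlib

open Metric Set
open scoped RealInnerProductSpace

/-- A unitary representation `(π, H)` of `K` is tame (the union of the fixed spaces
`H^{K_j}` is dense in `H`) if and only if it is continuous with respect to the group
topology on `K` for which the subgroups `(K_j)` form a basis of identity
neighborhoods. -/
theorem stmt_6 {K : Type*} [Group K] [TopologicalSpace K] [IsTopologicalGroup K]
    {H : Type*} [NormedAddCommGroup H] [InnerProductSpace ℂ H] [CompleteSpace H]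
    {J : Type*} (Ksub : J → Subgroup K)
    (hbasis : (nhds (1 : K)).HasBasis (fun _ : J => True) (fun j => (Ksub j : Set K)))
    (π : K →* (H ≃ₗᵢ[ℂ] H)) :
    Dense (⋃ j : J, {v : H | ∀ g ∈ Ksub j, π g v = v}) ↔
      ∀ v : H, Continuous fun g : K => π g v := by
  constructor
  · -- tame → continuous orbit maps
    intro hdense v
    -- vectors in the union of fixed spaces have continuous orbit maps
    have key : ∀ w ∈ (⋃ j : J, {v : H | ∀ g ∈ Ksub j, π g v = v}),
        Continuous fun g : K => π g w := by
      intro w hw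
      rcases mem_iUnion.1 hw with ⟨j, hj⟩
      rw [continuous_iff_continuousAt]
      intro g₀
      have hKj : (Ksub j : Set K) ∈ nhds (1 : K) := hbasis.mem_of_mem trivial
      have hmem : {g : K | (π g₀) w = (π g) w} ∈ nhds g₀ := by
        rw [← map_mul_left_nhds_one g₀, Filter.mem_map]
        refine Filter.mem_of_superset hKj ?_
        intro k hk
        have : (π k) w = w := hj k hk
        simp only [Set.mem_preimage, Set.mem_setOf_eq, map_mul]
        simp [this]
      exact continuousAt_const.congr (Filter.eventuallyEq_of_mem hmem fun g hg => hg)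
    -- approximate v by such vectors; uniform convergence gives continuity
    have hv : v ∈ closure (⋃ j : J, {v : H | ∀ g ∈ Ksub j, π g v = v}) :=
      hdense v
    rcases mem_closure_iff_seq_limit.1 hv with ⟨u, hu, hlim⟩
    have htu : TendstoUniformly (fun n (g : K) => π g (u n)) (fun g => π g v)
        Filter.atTop := by
      rw [Metric.tendstoUniformly_iff]
      intro ε hε
      have : Filter.Tendsto (fun n => dist (u n) v) Filter.atTop (nhds 0) := by
        simpa [dist_eq_norm] using
          (tendsto_iff_dist_tendsto_zero.1 hlim)
      filter_upwards [this.eventually (gt_mem_nhds hε)] with n hn g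
      simpa [LinearIsometryEquiv.dist_map, dist_comm] using hn
    exact htu.continuous (Filter.Eventually.of_forall fun n => key (u n) (hu n)).frequently
  · -- continuous → tame
    intro hcont
    letI : InnerProductSpace ℝ H := InnerProductSpace.complexToReal
    rw [Metric.dense_iff]
    intro v r hr
    have h1 : (π (1 : K)) v = v := by simp
    have hb : (fun g : K => π g v) ⁻¹' Metric.ball v (r / 2) ∈ nhds (1 : K) := by
      refine (hcont v).continuousAt.preimage_mem_nhds ?_
      rw [h1]
      exact Metric.ball_mem_nhds v (by positivity)
    obtain ⟨j, -, hj⟩ := hbasis.mem_iff.1 hb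
    set O : Set H := (fun g : K => π g v) '' (Ksub j) with hO
    set C : Set H := closure (convexHull ℝ O) with hC
    have hvO : v ∈ O := ⟨1, one_mem _, h1⟩
    have hCne : C.Nonempty := ⟨v, subset_closure (subset_convexHull ℝ O hvO)⟩
    have hCconv : Convex ℝ C := (convex_convexHull ℝ O).closure
    have hCcomplete : IsComplete C := isClosed_closure.isComplete
    have hOb : O ⊆ Metric.closedBall v (r / 2) := by
      rintro x ⟨g, hg, rfl⟩
      exact Metric.ball_subset_closedBall (hj hg)
    have hCb : C ⊆ Metric.closedBall v (r / 2) :=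
      closure_minimal (convexHull_min hOb (convex_closedBall v (r / 2)))
        Metric.isClosed_closedBall
    -- C is invariant under Ksub j
    have hinv : ∀ k ∈ Ksub j, ∀ x ∈ C, π k x ∈ C := by
      intro k hk x hx
      set T : H →ₗ[ℝ] H := ((π k).toLinearEquiv.toLinearMap.restrictScalars ℝ) with hT
      have hTc : Continuous T := (π k).continuous
      have hTO : T '' O ⊆ O := by
        rintro _ ⟨_, ⟨g, hg, rfl⟩, rfl⟩
        exact ⟨k * g, mul_mem hk hg, by simp [hT, map_mul]⟩
      have hch : T '' convexHull ℝ O ⊆ convexHull ℝ O := by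
        rw [T.image_convexHull]
        exact convexHull_mono hTO
      have : T x ∈ C := by
        rw [hC]
        have hx' : T x ∈ T '' closure (convexHull ℝ O) := ⟨x, hx, rfl⟩
        have := (image_closure_subset_closure_image hTc) hx'
        exact closure_mono hch this
      exact this
    -- unique element of minimal norm in C
    obtain ⟨w, hwC, hwmin⟩ :=
      exists_norm_eq_iInf_of_complete_convex hCne hCcomplete hCconv 0
    have huniq : ∀ w' ∈ C, ‖(0 : H) - w'‖ = ⨅ z : C, ‖(0 : H) - z‖ → w' = w := by
      intro w' hw' hmin'
      have h₁ := (norm_eq_iInf_iff_real_inner_le_zero hCconv hwC).1 hwmin w' hw'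
      have h₂ := (norm_eq_iInf_iff_real_inner_le_zero hCconv hw').1 hmin' w hwC
      have h1' : (0 : ℝ) ≤ inner ℝ w (w' - w) := by
        rw [zero_sub, inner_neg_left] at h₁; linarith
      have h2' : (0 : ℝ) ≤ inner ℝ w' (w - w') := by
        rw [zero_sub, inner_neg_left] at h₂; linarith
      have hsum : (inner ℝ (w' - w) (w' - w) : ℝ) ≤ 0 := by
        have e : (inner ℝ (w' - w) (w' - w) : ℝ)
            = (inner ℝ w' (w' - w) : ℝ) - (inner ℝ w (w' - w) : ℝ) := inner_sub_left _ _ _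
        have e2 : (inner ℝ w' (w - w') : ℝ) = -(inner ℝ w' (w' - w) : ℝ) := by
          rw [← neg_sub w' w, inner_neg_right]
        rw [e2] at h2'
        linarith
      have := real_inner_self_nonpos.1 hsum
      rwa [sub_eq_zero] at this
    -- w is fixed by Ksub j
    have hwfix : ∀ g ∈ Ksub j, π g w = w := by
      intro k hk
      refine huniq (π k w) (hinv k hk w hwC) ?_
      rw [show ‖(0 : H) - (π k) w‖ = ‖(0 : H) - w‖ by simp, hwmin]
    refine ⟨w, Metric.mem_ball.2 ?_, mem_iUnion.2 ⟨j, hwfix⟩⟩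
    have : dist w v ≤ r / 2 := Metric.mem_closedBall.1 (hCb hwC)
    linarith
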